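/- Let φ be an N-function of class C¹([0,∞)) ∩ C²((0,∞)) with φ'(t) ∼ t·φ''(t) uniformly in t > 0. Define Φ: ℝ^{Nn} → ℝ by Φ(z) = φ(√(1+|z|²)). Then there exist constants c₁, c₂ > 0 such that for all y, z ∈ ℝ^{Nn}: c₁·φ''(√(1+|z+y|²))·|y|² ≤ (D²Φ(z+y) y, y) ≤ c₂·φ''(√(1+|z+y|²))·|y|². -/

import Mathlib

open MeasureTheory Real Filter

def IsNFunction (φ φ' : ℝ → ℝ) : Prop :=
  ConvexOn ℝ (Set.Ici 0) φ ∧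
  φ 0 = 0 ∧ φ' 0 = 0 ∧
  (∀ t : ℝ, 0 ≤ t → φ t = ∫ s in (0:ℝ)..t, φ' s) ∧
  (∀ t : ℝ, 0 ≤ t → ContinuousWithinAt φ' (Set.Ici t) t) ∧
  MonotoneOn φ' (Set.Ici 0) ∧
  (∀ t : ℝ, 0 < t → 0 < φ' t) ∧
  Tendsto φ' atTop atTop


/-- The Assumption: `φ` is an N-function of class `C¹([0,∞)) ∩ C²((0,∞))`,
with derivative `φ'` and second derivative `φ''`. -/
def SatisfiesAssumption (φ φ' φ'' : ℝ → ℝ) : Prop :=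
  IsNFunction φ φ' ∧
  (∀ t : ℝ, 0 ≤ t → HasDerivWithinAt φ (φ' t) (Set.Ici 0) t) ∧
  ContinuousOn φ' (Set.Ici 0) ∧
  (∀ t : ℝ, 0 < t → HasDerivAt φ' (φ'' t) t) ∧
  ContinuousOn φ'' (Set.Ioi 0)

section Aux

variable {E : Type*} [NormedAddCommGroup E] [InnerProductSpace ℝ E]

/-- Derivative of `u ↦ √(1+u)` at a nonnegative point. -/
private lemma aux_sqrt_deriv (u : ℝ) (hu : 0 ≤ u) :
    HasDerivAt (fun t : ℝ => Real.sqrt (1 + t)) (1 / (2 * Real.sqrt (1 + u))) u := by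
  have hpos : (0:ℝ) < 1 + u := by linarith
  have := (Real.hasDerivAt_sqrt hpos.ne').comp u ((hasDerivAt_id u).const_add 1)
  simpa [Function.comp_def] using this

/-- First derivative of `z ↦ φ(√(1+‖z‖²))`. -/
private lemma aux_first_deriv (φ φ' : ℝ → ℝ)
    (hφd : ∀ t, 1 ≤ t → HasDerivAt φ (φ' t) t) (z : E) :
    HasFDerivAt (fun z : E => φ (Real.sqrt (1 + ‖z‖ ^ 2)))
      ((φ' (Real.sqrt (1 + ‖z‖ ^ 2)) / Real.sqrt (1 + ‖z‖ ^ 2)) • innerSL ℝ z) z := by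
  have hr1 : (1:ℝ) ≤ Real.sqrt (1 + ‖z‖ ^ 2) := Real.one_le_sqrt.2 (by nlinarith [sq_nonneg ‖z‖])
  have hrpos : (0:ℝ) < Real.sqrt (1 + ‖z‖ ^ 2) := by linarith
  have hs := aux_sqrt_deriv (‖z‖ ^ 2) (by positivity)
  have hψ : HasDerivAt (fun u : ℝ => φ (Real.sqrt (1 + u)))
      (φ' (Real.sqrt (1 + ‖z‖ ^ 2)) * (1 / (2 * Real.sqrt (1 + ‖z‖ ^ 2)))) (‖z‖ ^ 2) := by
    simpa [Function.comp_def] using HasDerivAt.comp (‖z‖ ^ 2) (hφd _ hr1) hs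
  have hns : HasFDerivAt (fun z : E => ‖z‖ ^ 2) (2 • innerSL ℝ z) z :=
    (hasStrictFDerivAt_norm_sq z).hasFDerivAt
  have h : HasFDerivAt (fun z : E => φ (Real.sqrt (1 + ‖z‖ ^ 2)))
      ((φ' (Real.sqrt (1 + ‖z‖ ^ 2)) * (1 / (2 * Real.sqrt (1 + ‖z‖ ^ 2)))) • (2 • innerSL ℝ z)) z := by
    have := hψ.comp_hasFDerivAt z hns; exact this
  convert h using 1
  ext y
  simp only [ContinuousLinearMap.smul_apply, ContinuousLinearMap.coe_smul', Pi.smul_apply,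
    smul_eq_mul]
  field_simp
  ring

/-- Value of the second derivative quadratic form. -/
private lemma aux_second_deriv (φ φ' φ'' : ℝ → ℝ)
    (hφd : ∀ t, 1 ≤ t → HasDerivAt φ (φ' t) t)
    (hφ''d : ∀ t, 1 ≤ t → HasDerivAt φ' (φ'' t) t)
    (Φ : E → ℝ) (hΦ : ∀ z, Φ z = φ (Real.sqrt (1 + ‖z‖ ^ 2))) (w y : E) :
    fderiv ℝ (fderiv ℝ Φ) w y y =
      φ'' (Real.sqrt (1 + ‖w‖ ^ 2)) *
          ((inner ℝ w y : ℝ) / Real.sqrt (1 + ‖w‖ ^ 2)) ^ 2 +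
        (φ' (Real.sqrt (1 + ‖w‖ ^ 2)) / Real.sqrt (1 + ‖w‖ ^ 2)) *
          (‖y‖ ^ 2 - ((inner ℝ w y : ℝ) / Real.sqrt (1 + ‖w‖ ^ 2)) ^ 2) := by
  have hΦf : Φ = fun z : E => φ (Real.sqrt (1 + ‖z‖ ^ 2)) := funext hΦ
  have hfderiv : fderiv ℝ Φ =
      fun z : E => (φ' (Real.sqrt (1 + ‖z‖ ^ 2)) / Real.sqrt (1 + ‖z‖ ^ 2)) • innerSL ℝ z := by
    rw [hΦf]
    exact funext fun z => (aux_first_deriv φ φ' hφd z).fderiv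
  have hr1 : (1:ℝ) ≤ Real.sqrt (1 + ‖w‖ ^ 2) := Real.one_le_sqrt.2 (by nlinarith [sq_nonneg ‖w‖])
  have hrpos : (0:ℝ) < Real.sqrt (1 + ‖w‖ ^ 2) := by linarith
  have hs := aux_sqrt_deriv (‖w‖ ^ 2) (by positivity)
  have hn1 : HasDerivAt (fun u : ℝ => φ' (Real.sqrt (1 + u)))
      (φ'' (Real.sqrt (1 + ‖w‖ ^ 2)) * (1 / (2 * Real.sqrt (1 + ‖w‖ ^ 2)))) (‖w‖ ^ 2) := by
    simpa [Function.comp_def] using HasDerivAt.comp (‖w‖ ^ 2) (hφ''d _ hr1) hs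
  have hG : HasDerivAt (fun u : ℝ => φ' (Real.sqrt (1 + u)) / Real.sqrt (1 + u))
      ((φ'' (Real.sqrt (1 + ‖w‖ ^ 2)) * (1 / (2 * Real.sqrt (1 + ‖w‖ ^ 2))) *
          Real.sqrt (1 + ‖w‖ ^ 2) -
        φ' (Real.sqrt (1 + ‖w‖ ^ 2)) * (1 / (2 * Real.sqrt (1 + ‖w‖ ^ 2)))) /
          Real.sqrt (1 + ‖w‖ ^ 2) ^ 2) (‖w‖ ^ 2) := hn1.div hs hrpos.ne'
  have hns : HasFDerivAt (fun z : E => ‖z‖ ^ 2) (2 • innerSL ℝ w) w :=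
    (hasStrictFDerivAt_norm_sq w).hasFDerivAt
  have hB : HasFDerivAt
      (fun z : E => φ' (Real.sqrt (1 + ‖z‖ ^ 2)) / Real.sqrt (1 + ‖z‖ ^ 2))
      (((φ'' (Real.sqrt (1 + ‖w‖ ^ 2)) * (1 / (2 * Real.sqrt (1 + ‖w‖ ^ 2))) *
          Real.sqrt (1 + ‖w‖ ^ 2) -
        φ' (Real.sqrt (1 + ‖w‖ ^ 2)) * (1 / (2 * Real.sqrt (1 + ‖w‖ ^ 2)))) /
          Real.sqrt (1 + ‖w‖ ^ 2) ^ 2) • (2 • innerSL ℝ w)) w := by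
    have := hG.comp_hasFDerivAt w hns; exact this
  have hinner : HasFDerivAt (fun z : E => innerSL ℝ z) (innerSL ℝ) w :=
    (innerSL ℝ).hasFDerivAt
  have hsecond : HasFDerivAt (fun z : E =>
      (φ' (Real.sqrt (1 + ‖z‖ ^ 2)) / Real.sqrt (1 + ‖z‖ ^ 2)) • innerSL ℝ z) _ w :=
    hB.smul hinner
  rw [hfderiv, hsecond.fderiv]
  simp only [ContinuousLinearMap.add_apply, ContinuousLinearMap.smul_apply,
    ContinuousLinearMap.coe_smul', Pi.smul_apply, ContinuousLinearMap.smulRight_apply,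
    innerSL_apply_apply, smul_eq_mul, real_inner_self_eq_norm_sq]
  field_simp
  rw [← real_inner_self_eq_norm_sq y]
  rw [show (innerSL ℝ y) y = inner ℝ y y from rfl]
  ring

/-- The elementary real-number bound for the quadratic form. -/
private lemma aux_bound (c c' p q rr s Y : ℝ) (hc : 0 < c) (hc' : 0 < c')
    (hrpos : 0 < rr) (hqpos : 0 < q)
    (hlow : c * (rr * p) ≤ q) (hhigh : q ≤ c' * (rr * p))
    (hs0 : 0 ≤ s) (hsle : s ≤ Y) :
    min 1 c * (p * Y) ≤ p * s + q / rr * (Y - s) ∧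
      p * s + q / rr * (Y - s) ≤ max 1 c' * (p * Y) := by
  have hppos : 0 < p := by nlinarith [mul_pos hc' hrpos]
  have hql : c * p ≤ q / rr := by
    rw [le_div_iff₀ hrpos]; nlinarith
  have hqh : q / rr ≤ c' * p := by
    rw [div_le_iff₀ hrpos]; nlinarith
  have hYs : 0 ≤ Y - s := sub_nonneg.2 hsle
  constructor
  · have b1 : min 1 c * (p * s) ≤ 1 * (p * s) :=
      mul_le_mul_of_nonneg_right (min_le_left 1 c) (mul_nonneg hppos.le hs0)
    have b2 : c * p * (Y - s) ≤ q / rr * (Y - s) :=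
      mul_le_mul_of_nonneg_right hql hYs
    have b3 : min 1 c * (p * (Y - s)) ≤ c * (p * (Y - s)) :=
      mul_le_mul_of_nonneg_right (min_le_right 1 c) (mul_nonneg hppos.le hYs)
    nlinarith
  · have b1 : 1 * (p * s) ≤ max 1 c' * (p * s) :=
      mul_le_mul_of_nonneg_right (le_max_left 1 c') (mul_nonneg hppos.le hs0)
    have b2 : q / rr * (Y - s) ≤ c' * p * (Y - s) :=
      mul_le_mul_of_nonneg_right hqh hYs
    have b3 : c' * (p * (Y - s)) ≤ max 1 c' * (p * (Y - s)) :=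
      mul_le_mul_of_nonneg_right (le_max_right 1 c') (mul_nonneg hppos.le hYs)
    nlinarith

end Aux

/-- Under the Assumption, with `Φ(z) = φ(√(1+|z|²))`:
`(D²Φ(z+y) y, y) ∼ φ''(√(1+|z+y|²))·|y|²`. -/
theorem hessian_sqrt_equiv (φ φ' φ'' : ℝ → ℝ) (hA : SatisfiesAssumption φ φ' φ'')
    (c c' : ℝ) (hc : 0 < c) (hc' : 0 < c')
    (hequiv : ∀ t : ℝ, 0 < t → c * (t * φ'' t) ≤ φ' t ∧ φ' t ≤ c' * (t * φ'' t))
    (N n : ℕ) (Φ : EuclideanSpace ℝ (Fin (N * n)) → ℝ)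
    (hΦ : ∀ z, Φ z = φ (Real.sqrt (1 + ‖z‖ ^ 2))) :
    ∃ c₁ c₂ : ℝ, 0 < c₁ ∧ 0 < c₂ ∧
      ∀ y z : EuclideanSpace ℝ (Fin (N * n)),
        c₁ * (φ'' (Real.sqrt (1 + ‖z + y‖ ^ 2)) * ‖y‖ ^ 2) ≤
          fderiv ℝ (fderiv ℝ Φ) (z + y) y y ∧
        fderiv ℝ (fderiv ℝ Φ) (z + y) y y ≤
          c₂ * (φ'' (Real.sqrt (1 + ‖z + y‖ ^ 2)) * ‖y‖ ^ 2) := by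
  obtain ⟨hN, hφd0, _, hφ''d, _⟩ := hA
  have hφ'pos : ∀ t : ℝ, 0 < t → 0 < φ' t := hN.2.2.2.2.2.2.1
  have hφd : ∀ t, 1 ≤ t → HasDerivAt φ (φ' t) t := fun t ht =>
    (hφd0 t (by linarith)).hasDerivAt (Ici_mem_nhds (by linarith))
  have hφ''d1 : ∀ t, 1 ≤ t → HasDerivAt φ' (φ'' t) t := fun t ht => hφ''d t (by linarith)
  refine ⟨min 1 c, max 1 c', lt_min one_pos hc, lt_of_lt_of_le one_pos (le_max_left _ _), ?_⟩
  intro y z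
  have hr1 : (1:ℝ) ≤ Real.sqrt (1 + ‖z + y‖ ^ 2) :=
    Real.one_le_sqrt.2 (by nlinarith [sq_nonneg ‖z + y‖])
  have hrpos : (0:ℝ) < Real.sqrt (1 + ‖z + y‖ ^ 2) := by linarith
  have hrsq : Real.sqrt (1 + ‖z + y‖ ^ 2) ^ 2 = 1 + ‖z + y‖ ^ 2 :=
    Real.sq_sqrt (by positivity)
  have hval := aux_second_deriv φ φ' φ'' hφd hφ''d1 Φ hΦ (z + y) y
  have hqpos : 0 < φ' (Real.sqrt (1 + ‖z + y‖ ^ 2)) := hφ'pos _ hrpos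
  obtain ⟨hlow, hhigh⟩ := hequiv (Real.sqrt (1 + ‖z + y‖ ^ 2)) hrpos
  have hcs : ((inner ℝ (z + y) y : ℝ)) ^ 2 ≤ ‖z + y‖ ^ 2 * ‖y‖ ^ 2 := by
    have h := real_inner_mul_inner_self_le (z + y) y
    rw [real_inner_self_eq_norm_sq, real_inner_self_eq_norm_sq] at h
    nlinarith [h]
  have hsle : ((inner ℝ (z + y) y : ℝ) / Real.sqrt (1 + ‖z + y‖ ^ 2)) ^ 2 ≤ ‖y‖ ^ 2 := by
    rw [div_pow, div_le_iff₀ (by positivity)]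
    calc ((inner ℝ (z + y) y : ℝ)) ^ 2 ≤ ‖z + y‖ ^ 2 * ‖y‖ ^ 2 := hcs
    _ ≤ (1 + ‖z + y‖ ^ 2) * ‖y‖ ^ 2 := by nlinarith [sq_nonneg ‖y‖]
    _ = ‖y‖ ^ 2 * Real.sqrt (1 + ‖z + y‖ ^ 2) ^ 2 := by rw [hrsq]; ring
  obtain ⟨h1, h2⟩ := aux_bound c c' (φ'' (Real.sqrt (1 + ‖z + y‖ ^ 2)))
    (φ' (Real.sqrt (1 + ‖z + y‖ ^ 2))) (Real.sqrt (1 + ‖z + y‖ ^ 2))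
    (((inner ℝ (z + y) y : ℝ) / Real.sqrt (1 + ‖z + y‖ ^ 2)) ^ 2) (‖y‖ ^ 2)
    hc hc' hrpos hqpos hlow hhigh (sq_nonneg _) hsle
  rw [hval]
  exact ⟨h1, h2⟩
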